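/- (Slash in terms of double-slash) Let f : Ω → L be quasi-modular of weight k, type m and depth ≤ ℓ for Γ with coefficient family (f₀,…,f_ℓ). Then for every γ = (a, b; c, d) ∈ GL₂(F) and z ∈ Ω: (f |_{k,m} γ)(z) = Σ_{i=0}^{ℓ} (c/(cz+d))^i · (f_i ∥_{k−2i,m−i} γ)(z), where the double-slash of f_i is taken with respect to the coefficient family ((f_i)_h)_h = ((h+i choose i)·f_{h+i})_{h=0,…,ℓ−i}, i.e. (f_i ∥_{k−2i,m−i} γ)(z) = Σ_{h=0}^{ℓ−i} (−c/(cz+d))^h (det γ)^{(m−i)−h} (cz+d)^{2h−(k−2i)} (h+i choose i) f_{h+i}(γ·z). -/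
import Mathlib


noncomputable section

namespace DrinfeldQM

variable {L : Type*} [Field L]

/-- Entry `(i,j)` of `γ ∈ GL₂(F)`, viewed inside `L`. -/
def Mc (F : Subfield L) (γ : GL (Fin 2) F) (i j : Fin 2) : L :=
  ((γ : Matrix (Fin 2) (Fin 2) F) i j : L)

/-- Determinant of `γ ∈ GL₂(F)`, viewed inside `L`. -/
def detL (F : Subfield L) (γ : GL (Fin 2) F) : L :=
  ((γ : Matrix (Fin 2) (Fin 2) F).det : L)

/-- Automorphy factor `cz + d`. -/
def jf (F : Subfield L) (γ : GL (Fin 2) F) (z : L) : L :=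
  Mc F γ 1 0 * z + Mc F γ 1 1

/-- Fractional linear action of `GL₂(F)` on `L` (restricting to `Ω`). -/
def act (F : Subfield L) (γ : GL (Fin 2) F) (z : L) : L :=
  (Mc F γ 0 0 * z + Mc F γ 0 1) / jf F γ z

/-- The Drinfeld upper half plane `Ω = L ∖ F`. -/
def Omega (F : Subfield L) : Set L := {z | z ∉ F}

/-- The slash operator `f |_{k,m} γ` of weight `k` and type `m`. -/
def slash (F : Subfield L) (k m : ℤ) (f : L → L) (γ : GL (Fin 2) F) : L → L :=
  fun z => detL F γ ^ m * jf F γ z ^ (-k) * f (act F γ z)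

/-- `f` is quasi-modular of weight `k`, type `m` and depth `≤ ℓ` for the set `S ⊆ GL₂(F)`
with coefficient family `fam` (only the indices `0,…,ℓ` of `fam` are relevant). -/
def IsQM (F : Subfield L) (S : Set (GL (Fin 2) F)) (k m : ℤ) (ℓ : ℕ)
    (f : L → L) (fam : ℕ → L → L) : Prop :=
  Set.EqOn (fam 0) f (Omega F) ∧
    ∀ γ ∈ S, ∀ z ∈ Omega F,
      slash F k m f γ z =
        ∑ i ∈ Finset.range (ℓ + 1), fam i z * (Mc F γ 1 0 / jf F γ z) ^ i

/-- The coefficient family of the `i`-th coefficient `f_i` of a quasi-modular function with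
coefficient family `fam`:  `(f_i)_h = ((h+i) choose i) · f_{h+i}`. -/
def shiftFam (i : ℕ) (fam : ℕ → L → L) : ℕ → L → L :=
  fun h z => ((h + i).choose i : L) * fam (h + i) z

/-- The double-slash operator `f ∥_{k,m} γ` of a quasi-modular function of depth `≤ ℓ` with
coefficient family `fam`. -/
def dslash (F : Subfield L) (k m : ℤ) (ℓ : ℕ) (fam : ℕ → L → L)
    (γ : GL (Fin 2) F) : L → L :=
  fun z => ∑ i ∈ Finset.range (ℓ + 1),
    (-(Mc F γ 1 0) / jf F γ z) ^ i * detL F γ ^ (m - (i : ℤ)) *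
      jf F γ z ^ (2 * (i : ℤ) - k) * fam i (act F γ z)

/-- The double-slash operator on polynomial-valued functions `P : Ω → L[X]`:
`(P ∥_{k,m} γ)(z, X) = (det γ)^m (cz+d)^{-k} P(γ·z, ((cz+d)²/det γ)(X - c/(cz+d)))`. -/
def pdslash (F : Subfield L) (k m : ℤ) (P : L → Polynomial L)
    (γ : GL (Fin 2) F) : L → Polynomial L :=
  fun z =>
    Polynomial.C (detL F γ ^ m * jf F γ z ^ (-k)) *
      (P (act F γ z)).comp
        (Polynomial.C (jf F γ z ^ 2 / detL F γ) *
          (Polynomial.X - Polynomial.C (Mc F γ 1 0 / jf F γ z)))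

/-- The associated polynomial `P_f(z, X) = ∑_{i=0}^{ℓ} f_i(z) Xⁱ`. -/
def assocPoly (ℓ : ℕ) (fam : ℕ → L → L) : L → Polynomial L :=
  fun z => ∑ i ∈ Finset.range (ℓ + 1), Polynomial.C (fam i z) * Polynomial.X ^ i

/-- `E` satisfies the functional equation of the false Eisenstein series (weight 2, type 1,
depth 1, coefficient family `(E, -π⁻¹)`) for all `γ ∈ S`. -/
def EFunEq (F : Subfield L) (S : Set (GL (Fin 2) F)) (π : L) (E : L → L) : Prop :=
  ∀ γ ∈ S, ∀ z ∈ Omega F,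
    E (act F γ z) =
      (detL F γ)⁻¹ * jf F γ z ^ 2 * (E z - Mc F γ 1 0 / (π * jf F γ z))

lemma detL_ne_zero (F : Subfield L) (γ : GL (Fin 2) F) : detL F γ ≠ 0 := by
  have h : IsUnit (γ : Matrix (Fin 2) (Fin 2) F).det :=
    (Matrix.isUnit_iff_isUnit_det _).mp γ.isUnit
  simpa [detL] using h.ne_zero

lemma detL_eq (F : Subfield L) (γ : GL (Fin 2) F) :
    detL F γ = Mc F γ 0 0 * Mc F γ 1 1 - Mc F γ 0 1 * Mc F γ 1 0 := by
  simp [detL, Mc, Matrix.det_fin_two]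

lemma jf_ne_zero (F : Subfield L) (γ : GL (Fin 2) F) {z : L} (hz : z ∈ Omega F) :
    jf F γ z ≠ 0 := by
  intro h
  by_cases hc : Mc F γ 1 0 = 0
  · have hd : Mc F γ 1 1 = 0 := by simpa [jf, hc] using h
    have : detL F γ = 0 := by rw [detL_eq]; rw [hc, hd]; ring
    exact detL_ne_zero F γ this
  · apply hz
    have hz' : z = -Mc F γ 1 1 / Mc F γ 1 0 := by
      field_simp
      have : Mc F γ 1 0 * z + Mc F γ 1 1 = 0 := h
      linear_combination this
    rw [hz']
    exact F.div_mem (F.neg_mem (SetLike.coe_mem _)) (SetLike.coe_mem _)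

lemma act_mem_Omega (F : Subfield L) (γ : GL (Fin 2) F) {z : L} (hz : z ∈ Omega F) :
    act F γ z ∈ Omega F := by
  intro hw
  set w := act F γ z with hwdef
  have hj := jf_ne_zero F γ hz
  have heq : Mc F γ 0 0 * z + Mc F γ 0 1 = w * (Mc F γ 1 0 * z + Mc F γ 1 1) := by
    have hjj : jf F γ z = Mc F γ 1 0 * z + Mc F γ 1 1 := rfl
    rw [hwdef, act, ← hjj, div_mul_cancel₀ _ hj]
  by_cases h0 : Mc F γ 0 0 - w * Mc F γ 1 0 = 0
  · have hb : Mc F γ 0 1 = w * Mc F γ 1 1 := by linear_combination heq - z * h0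
    have ha : Mc F γ 0 0 = w * Mc F γ 1 0 := by linear_combination h0
    have : detL F γ = 0 := by rw [detL_eq, ha, hb]; ring
    exact detL_ne_zero F γ this
  · apply hz
    have hz' : z = (w * Mc F γ 1 1 - Mc F γ 0 1) / (Mc F γ 0 0 - w * Mc F γ 1 0) := by
      rw [eq_div_iff h0]
      linear_combination heq
    rw [hz']
    exact F.div_mem (F.sub_mem (F.mul_mem hw (SetLike.coe_mem _)) (SetLike.coe_mem _))
      (F.sub_mem (SetLike.coe_mem _) (F.mul_mem hw (SetLike.coe_mem _)))

lemma sum_triangle {M : Type*} [AddCommMonoid M] (ℓ : ℕ) (g : ℕ → ℕ → M) :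
    ∑ i ∈ Finset.range (ℓ + 1), ∑ h ∈ Finset.range (ℓ - i + 1), g i h
      = ∑ n ∈ Finset.range (ℓ + 1), ∑ i ∈ Finset.range (n + 1), g i (n - i) := by
  rw [Finset.sum_sigma', Finset.sum_sigma']
  refine Finset.sum_bij' (fun p _ => ⟨p.1 + p.2, p.1⟩) (fun p _ => ⟨p.2, p.1 - p.2⟩)
    ?_ ?_ ?_ ?_ ?_
  · rintro ⟨i, h⟩ hp
    simp only [Finset.mem_sigma, Finset.mem_range] at hp ⊢
    omega
  · rintro ⟨n, i⟩ hp
    simp only [Finset.mem_sigma, Finset.mem_range] at hp ⊢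
    omega
  · rintro ⟨i, h⟩ hp
    simp
  · rintro ⟨n, i⟩ hp
    simp only [Finset.mem_sigma, Finset.mem_range] at hp
    simp [Nat.add_sub_cancel']
    omega
  · rintro ⟨i, h⟩ hp
    simp

/-- The slash operator expressed in terms of double-slash operators of the coefficients. -/
theorem slash_eq_sum_dslash
    {L : Type*} [Field L] (F : Subfield L) (Γ : Subgroup (GL (Fin 2) F))
    (k m : ℤ) (ℓ : ℕ) (f : L → L) (fam : ℕ → L → L)
    (hQM : IsQM F (Γ : Set (GL (Fin 2) F)) k m ℓ f fam) :
    ∀ γ : GL (Fin 2) F, ∀ z ∈ Omega F,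
      slash F k m f γ z =
        ∑ i ∈ Finset.range (ℓ + 1),
          (Mc F γ 1 0 / jf F γ z) ^ i *
            dslash F (k - 2 * (i : ℤ)) (m - (i : ℤ)) (ℓ - i) (shiftFam i fam) γ z := by
  intro γ z hz
  have hj := jf_ne_zero F γ hz
  have hw := act_mem_Omega F γ hz
  have hf0 : fam 0 (act F γ z) = f (act F γ z) := hQM.1 hw
  simp only [dslash, shiftFam, Finset.mul_sum]
  rw [sum_triangle ℓ (fun i h =>
    (Mc F γ 1 0 / jf F γ z) ^ i *
      ((-Mc F γ 1 0 / jf F γ z) ^ h * detL F γ ^ (m - (i : ℤ) - (h : ℤ)) *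
        jf F γ z ^ (2 * (h : ℤ) - (k - 2 * (i : ℤ))) *
        (((h + i).choose i : L) * fam (h + i) (act F γ z))))]
  have hinner : ∀ n ∈ Finset.range (ℓ + 1),
      (∑ i ∈ Finset.range (n + 1),
        (Mc F γ 1 0 / jf F γ z) ^ i *
          ((-Mc F γ 1 0 / jf F γ z) ^ (n - i) * detL F γ ^ (m - (i : ℤ) - ((n - i : ℕ) : ℤ)) *
            jf F γ z ^ (2 * ((n - i : ℕ) : ℤ) - (k - 2 * (i : ℤ))) *
            ((((n - i) + i).choose i : L) * fam ((n - i) + i) (act F γ z)))) =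
      if n = 0 then detL F γ ^ m * jf F γ z ^ (-k) * f (act F γ z) else 0 := by
    intro n _
    have hterm : ∀ i ∈ Finset.range (n + 1),
        (Mc F γ 1 0 / jf F γ z) ^ i *
          ((-Mc F γ 1 0 / jf F γ z) ^ (n - i) * detL F γ ^ (m - (i : ℤ) - ((n - i : ℕ) : ℤ)) *
            jf F γ z ^ (2 * ((n - i : ℕ) : ℤ) - (k - 2 * (i : ℤ))) *
            ((((n - i) + i).choose i : L) * fam ((n - i) + i) (act F γ z))) =
        (Mc F γ 1 0 / jf F γ z) ^ i * (-(Mc F γ 1 0 / jf F γ z)) ^ (n - i) *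
          (n.choose i : L) *
          (detL F γ ^ (m - (n : ℤ)) * jf F γ z ^ (2 * (n : ℤ) - k) * fam n (act F γ z)) := by
      intro i hi
      have hin : i ≤ n := by
        simp only [Finset.mem_range] at hi; omega
      have h1 : ((n - i : ℕ) : ℤ) = (n : ℤ) - (i : ℤ) := by
        push_cast [Nat.cast_sub hin]; ring
      have h2 : (n - i) + i = n := by omega
      rw [h1, h2]
      have e1 : m - (i : ℤ) - ((n : ℤ) - (i : ℤ)) = m - (n : ℤ) := by ring
      have e2 : 2 * ((n : ℤ) - (i : ℤ)) - (k - 2 * (i : ℤ)) = 2 * (n : ℤ) - k := by ring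
      rw [e1, e2, neg_div]
      ring
    rw [Finset.sum_congr rfl hterm, ← Finset.sum_mul]
    have hbin : (∑ i ∈ Finset.range (n + 1),
        (Mc F γ 1 0 / jf F γ z) ^ i * (-(Mc F γ 1 0 / jf F γ z)) ^ (n - i) *
          (n.choose i : L)) =
        (Mc F γ 1 0 / jf F γ z + -(Mc F γ 1 0 / jf F γ z)) ^ n := (add_pow _ _ _).symm
    rw [hbin, add_neg_cancel, zero_pow_eq]
    by_cases hn : n = 0
    · subst hn
      simp [hf0]
    · simp [hn]
  rw [Finset.sum_congr rfl hinner, Finset.sum_ite_eq' (Finset.range (ℓ + 1)) 0]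
  simp [slash]

end DrinfeldQM
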